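/- Let C be a bipartite symmetrizable generalized Cartan matrix with I = I_+ ⊔ I_− (i.e., C_{ij} < 0 only when i and j lie in different parts). Define the matrix B = B(C) by B_{ij} = −C_{ij} if (i,j) ∈ I_+ × I_−, B_{ij} = C_{ij} if (i,j) ∈ I_− × I_+, and B_{ij} = 0 otherwise. Then B is skew-symmetrizable (with the same symmetrizer D as C) and satisfies conditions (B1) and (B2): B_{ij} ≠ 0 only for pairs in (I_+ × I_−) ∪ (I_− × I_+), and μ_+(B) = μ_−(B) = −B. -/
import Mathlib

/-- Matrix mutation `μ_k(B)` of an integer matrix. -/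
def matMut {I : Type*} [DecidableEq I] (B : I → I → ℤ) (k : I) : I → I → ℤ :=
  fun i j =>
    if i = k ∨ j = k then -B i j
    else B i j + (|B i k| * B k j + B i k * |B k j|) / 2

/-- Sign-twist of `B` by a set `S`: negate entries with a row or column index in `S`. -/
def auxM {I : Type*} (B : I → I → ℤ) (S : I → Bool) : I → I → ℤ :=
  fun i j => if S i || S j then -B i j else B i j

lemma cancel_aux (x y : ℤ) (h : x * y ≤ 0) : |x| * y + x * |y| = 0 := by
  rcases abs_cases x with ⟨hx, hx'⟩ | ⟨hx, hx'⟩ <;>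
    rcases abs_cases y with ⟨hy, hy'⟩ | ⟨hy, hy'⟩ <;> nlinarith

lemma step_aux {I : Type*} [DecidableEq I] (B : I → I → ℤ) (eps : I → Bool) (b : Bool)
    (hB0 : ∀ i j, eps i = eps j → B i j = 0)
    (hprod : ∀ i k j, B i k * B k j ≤ 0)
    (S : I → Bool) (hS : ∀ i, S i = true → eps i = b)
    (k : I) (hk : eps k = b) (hSk : S k = false) :
    matMut (auxM B S) k = auxM B (fun i => S i || decide (i = k)) := by
  funext i j
  by_cases hik : i = k
  · subst hik
    have h1 : S i = false := hSk
    by_cases hj : S j = true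
    · have : B i j = 0 := hB0 i j (by rw [hk, hS j hj])
      simp [matMut, auxM, h1, hj, this]
    · simp at hj
      simp [matMut, auxM, h1, hj]
  · by_cases hjk : j = k
    · subst hjk
      have h1 : S j = false := hSk
      by_cases hi : S i = true
      · have : B i j = 0 := hB0 i j (by rw [hk, hS i hi])
        simp [matMut, auxM, h1, hi, this, hik]
      · simp at hi
        simp [matMut, auxM, h1, hi, hik]
    · have hcond : ¬ (i = k ∨ j = k) := by tauto
      have hx : auxM B S i k = (if S i then -B i k else B i k) := by
        simp [auxM, hSk]
      have hy : auxM B S k j = (if S j then -B k j else B k j) := by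
        simp [auxM, hSk]
      have hzero : |auxM B S i k| * auxM B S k j + auxM B S i k * |auxM B S k j| = 0 := by
        by_cases hi : S i = true
        · have : B i k = 0 := hB0 i k (by rw [hk, hS i hi])
          rw [hx, hy]; simp [hi, this]
        · by_cases hj : S j = true
          · have : B k j = 0 := hB0 k j (by rw [hk, hS j hj])
            rw [hx, hy]; simp [hj, this]
          · simp only [Bool.not_eq_true] at hi hj
            rw [hx, hy]; simp only [hi, hj, if_neg, Bool.false_eq_true, if_false]
            exact cancel_aux _ _ (hprod i k j)
      have hR : ((fun i => S i || decide (i = k)) i || (fun i => S i || decide (i = k)) j)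
          = (S i || S j) := by
        simp [hik, hjk]
      simp only [matMut, if_neg hcond]
      rw [hzero]
      norm_num
      simp [auxM, hik, hjk]

lemma fold_aux {I : Type*} [DecidableEq I] (B : I → I → ℤ) (eps : I → Bool) (b : Bool)
    (hB0 : ∀ i j, eps i = eps j → B i j = 0)
    (hprod : ∀ i k j, B i k * B k j ≤ 0) :
    ∀ l : List I, l.Nodup → (∀ i ∈ l, eps i = b) →
    ∀ S : I → Bool, (∀ i, S i = true → eps i = b) → (∀ i ∈ l, S i = false) →
    l.foldl (fun M k => matMut M k) (auxM B S) = auxM B (fun i => S i || decide (i ∈ l)) := by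
  intro l
  induction l with
  | nil => intro _ _ S _ _; simp [auxM]
  | cons k t ih =>
    intro hnd hmem S hS hSl
    have h1 : List.foldl (fun M k => matMut M k) (auxM B S) (k :: t)
        = List.foldl (fun M k => matMut M k) (matMut (auxM B S) k) t := rfl
    rw [h1, step_aux B eps b hB0 hprod S hS k (hmem k (by simp)) (hSl k (by simp))]
    rw [ih hnd.of_cons (fun i hi => hmem i (List.mem_cons_of_mem _ hi))
      (fun i => S i || decide (i = k))
      (fun i hi => by
        rcases Bool.or_eq_true_iff.mp hi with h | h
        · exact hS i h
        · simp at h; subst h; exact hmem i (by simp))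
      (fun i hi => by
        have h1 : S i = false := hSl i (List.mem_cons_of_mem _ hi)
        have h2 : i ≠ k := by rintro rfl; exact (List.nodup_cons.mp hnd).1 hi
        simp [h1, h2])]

    funext i
    simp [List.mem_cons, Bool.or_assoc]

lemma main_fold {I : Type*} [DecidableEq I] (B : I → I → ℤ) (eps : I → Bool) (b : Bool)
    (hB0 : ∀ i j, eps i = eps j → B i j = 0)
    (hprod : ∀ i k j, B i k * B k j ≤ 0)
    (l : List I) (hnd : l.Nodup) (hmem : ∀ i, i ∈ l ↔ eps i = b) :
    l.foldl (fun M k => matMut M k) B = -B := by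
  have hB' : B = auxM B (fun _ => false) := by funext i j; simp [auxM]
  conv_lhs => rw [hB']
  rw [fold_aux B eps b hB0 hprod l hnd (fun i hi => (hmem i).mp hi)
    (fun _ => false) (by simp) (by simp)]
  funext i j
  simp only [auxM, Bool.false_or, Pi.neg_apply]
  by_cases h : (decide (i ∈ l) || decide (j ∈ l)) = true
  · rw [if_pos h]
  · rw [if_neg h]
    simp only [Bool.or_eq_true, decide_eq_true_eq, not_or] at h
    have hi : eps i ≠ b := fun hb => h.1 ((hmem i).mpr hb)
    have hj : eps j ≠ b := fun hb => h.2 ((hmem j).mpr hb)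
    clear hB'
    have : B i j = 0 := hB0 i j (by
      clear hmem h
      cases hbi : eps i <;> cases hbj : eps j <;> cases b <;> simp_all)
    rw [this]; ring

theorem bipartite_Cartan_gives_B {I : Type*} [Fintype I] [DecidableEq I]
    (C : I → I → ℤ) (d : I → ℤ) (hd : ∀ i, 0 < d i)
    (hdiag : ∀ i, C i i = 2) (hoff : ∀ i j, i ≠ j → C i j ≤ 0)
    (hzero : ∀ i j, C i j = 0 ↔ C j i = 0)
    (hsym : ∀ i j, d i * C i j = d j * C j i)
    (eps : I → Bool) (hbip : ∀ i j, C i j < 0 → eps i ≠ eps j)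
    (B : I → I → ℤ)
    (hB : ∀ i j, B i j =
      if eps i = true ∧ eps j = false then -C i j
      else if eps i = false ∧ eps j = true then C i j
      else 0) :
    (∀ i j, d i * B i j = -(d j * B j i)) ∧
    (∀ i j, B i j ≠ 0 → eps i ≠ eps j) ∧
    (∀ l : List I, l.Nodup → (∀ i, i ∈ l ↔ eps i = true) →
      l.foldl (fun M k => matMut M k) B = -B) ∧
    (∀ l : List I, l.Nodup → (∀ i, i ∈ l ↔ eps i = false) →
      l.foldl (fun M k => matMut M k) B = -B) := by
  have hB0 : ∀ i j, eps i = eps j → B i j = 0 := by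
    intro i j h
    rw [hB i j]
    cases hei : eps i <;> cases hej : eps j <;> simp_all
  have hprod : ∀ i k j, B i k * B k j ≤ 0 := by
    intro i k j
    by_cases h1 : eps i = eps k
    · rw [hB0 i k h1]; simp
    by_cases h2 : eps k = eps j
    · rw [hB0 k j h2]; simp
    have hik : i ≠ k := fun h => h1 (h ▸ rfl)
    have hkj : k ≠ j := fun h => h2 (h ▸ rfl)
    have c1 := hoff i k hik
    have c2 := hoff k j hkj
    cases hei : eps i <;> cases hek : eps k
    · exact absurd (hei.trans hek.symm) h1
    · have hej : eps j = false := by cases hej' : eps j <;> simp_all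
      rw [hB i k, hB k j]
      simp only [hei, hek, hej]
      norm_num
      nlinarith
    · have hej : eps j = true := by cases hej' : eps j <;> simp_all
      rw [hB i k, hB k j]
      simp only [hei, hek, hej]
      norm_num
      nlinarith
    · exact absurd (hei.trans hek.symm) h1
  refine ⟨?_, ?_, ?_, ?_⟩
  · intro i j
    rw [hB i j, hB j i]
    cases hei : eps i <;> cases hej : eps j <;> simp only [hei, hej] <;> norm_num <;>
      linarith [hsym i j]
  · intro i j h hc
    exact h (hB0 i j hc)
  · intro l hnd hmem
    exact main_fold B eps true hB0 hprod l hnd hmem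
  · intro l hnd hmem
    exact main_fold B eps false hB0 hprod l hnd hmem
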